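/- (Correctness of the LINEAR EQUALITY rule.) Let a_1,...,a_n be non-zero integers, b an integer, and suppose integers d_1 ∈ D_1, ..., d_n ∈ D_n (with D_i integer intervals) satisfy Σ_{i=1}^n a_i·d_i = b. Then for every j, d_j ∈ D_j ∩ ((b - Σ_{i≠j} int(a_i·D_i)) / a_j), where the division of an integer interval by the nonzero integer a_j is {u ∈ ℤ | ∃x in the set, u·a_j = x}. -/

import Mathlib

/-- Correctness of the LINEAR EQUALITY rule: if `d_i ∈ [l_i..h_i]` for all `i`,
the `a_i` are nonzero, and `Σ a_i·d_i = b`, then for every `j`,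
`d_j ∈ D_j ∩ ((b - Σ_{i≠j} int(a_i·D_i)) / a_j)`; here
`int(a_i·D_i) = [min (a_i·l_i) (a_i·h_i) .. max (a_i·l_i) (a_i·h_i)]`, and division of
a set by `a_j` is `{u : ℤ | u·a_j` is in the set `}`. -/
theorem stmt_19 (n : ℕ) (a l h d : Fin n → ℤ) (b : ℤ)
    (ha : ∀ i, a i ≠ 0) (hd : ∀ i, d i ∈ Set.Icc (l i) (h i))
    (hsum : ∑ i, a i * d i = b) :
    ∀ j, d j ∈ Set.Icc (l j) (h j) ∧
      d j * a j ∈ Set.Icc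
        (b - ∑ i ∈ Finset.univ.erase j, max (a i * l i) (a i * h i))
        (b - ∑ i ∈ Finset.univ.erase j, min (a i * l i) (a i * h i)) := by
  intro j
  have hlo : ∀ i, min (a i * l i) (a i * h i) ≤ a i * d i := by
    intro i
    rcases le_total 0 (a i) with hs | hs
    · exact le_trans (min_le_left _ _) (mul_le_mul_of_nonneg_left (hd i).1 hs)
    · exact le_trans (min_le_right _ _) (mul_le_mul_of_nonpos_left (hd i).2 hs)
  have hhi : ∀ i, a i * d i ≤ max (a i * l i) (a i * h i) := by
    intro i
    rcases le_total 0 (a i) with hs | hs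
    · exact le_trans (mul_le_mul_of_nonneg_left (hd i).2 hs) (le_max_right _ _)
    · exact le_trans (mul_le_mul_of_nonpos_left (hd i).1 hs) (le_max_left _ _)
  have hsplit : d j * a j = b - ∑ i ∈ Finset.univ.erase j, a i * d i := by
    rw [← hsum, ← Finset.add_sum_erase Finset.univ (fun i => a i * d i) (Finset.mem_univ j)]
    ring
  refine ⟨hd j, ?_, ?_⟩
  · rw [hsplit]
    exact sub_le_sub_left (Finset.sum_le_sum fun i _ => hhi i) b
  · rw [hsplit]
    exact sub_le_sub_left (Finset.sum_le_sum fun i _ => hlo i) b
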